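/- The series ∑_{n=1}^∞ (1/4^n) * C(2n,n) / n^2 equals ζ(2) − 2·ln(2)^2. -/

import Mathlib

open Real Finset

/-- Real zeta value ζ(k) = ∑_{n≥1} 1/n^k. -/
noncomputable def zval (k : ℕ) : ℝ := ∑' n : ℕ, 1 / ((n : ℝ) + 1) ^ k

/-- Li₄(1/2) = ∑_{k≥1} (1/2)^k / k^4. -/
noncomputable def Li4half : ℝ := ∑' n : ℕ, (1 / 2 : ℝ) ^ (n + 1) / ((n : ℝ) + 1) ^ 4

/-- Harmonic number H_n = ∑_{k=1}^n 1/k. -/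
noncomputable def H (n : ℕ) : ℝ := ∑ k ∈ Finset.range n, 1 / ((k : ℝ) + 1)

/-- Generalized harmonic number H_n^{(2)} = ∑_{k=1}^n 1/k². -/
noncomputable def H2 (n : ℕ) : ℝ := ∑ k ∈ Finset.range n, 1 / ((k : ℝ) + 1) ^ 2

/-- Odd harmonic number O_n = ∑_{k=1}^n 1/(2k-1). -/
noncomputable def Oh (n : ℕ) : ℝ := ∑ k ∈ Finset.range n, 1 / (2 * (k : ℝ) + 1)

open Filter Set Topology


noncomputable def cb (n : ℕ) : ℝ := (Nat.choose (2*n) n : ℝ) / 4 ^ n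

lemma cb_zero : cb 0 = 1 := by simp [cb]

lemma cb_pos (n : ℕ) : 0 < cb n := by
  have h : 0 < Nat.choose (2*n) n := Nat.choose_pos (by omega)
  have h' : (0:ℝ) < (Nat.choose (2*n) n : ℝ) := by exact_mod_cast h
  have : (0:ℝ) < 4 ^ n := by positivity
  exact div_pos h' this

lemma cb_rec (n : ℕ) : (2*(n:ℝ)+2) * cb (n+1) = (2*(n:ℝ)+1) * cb n := by
  have h := Nat.succ_mul_centralBinom_succ n
  have h' : ((n:ℝ)+1) * (Nat.choose (2*(n+1)) (n+1) : ℝ) = 2 * (2*(n:ℝ)+1) * (Nat.choose (2*n) n : ℝ) := by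
    have := congrArg (Nat.cast : ℕ → ℝ) h
    push_cast [Nat.centralBinom] at this
    convert this using 2 <;> push_cast <;> ring
  have h4 : (0:ℝ) < 4 ^ n := by positivity
  simp only [cb]
  rw [show (4:ℝ) ^ (n+1) = 4 * 4 ^ n by ring]
  field_simp
  linear_combination 2 * h'

lemma cb_le_one (n : ℕ) : cb n ≤ 1 := by
  induction n with
  | zero => simp [cb]
  | succ n ih =>
    have h := cb_rec n
    nlinarith [cb_pos n, cb_pos (n+1)]

lemma cb_sym_sum (m : ℕ) :
    ∑ k ∈ range (m+1), (k:ℝ) * (cb k * cb (m-k)) = (m:ℝ)/2 * ∑ k ∈ range (m+1), cb k * cb (m-k) := by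
  have hrefl := Finset.sum_range_reflect (fun k => (k:ℝ) * (cb k * cb (m-k))) (m+1)
  simp only [Nat.add_sub_cancel] at hrefl
  have key : ∀ k ∈ range (m+1), ((m-k:ℕ):ℝ) * (cb (m-k) * cb (m-(m-k))) =
      ((m:ℝ) - k) * (cb k * cb (m-k)) := by
    intro k hk
    have hk' : k ≤ m := by simpa [Nat.lt_succ_iff] using hk
    rw [Nat.sub_sub_self hk', Nat.cast_sub hk']; ring
  have h2 : ∑ k ∈ range (m+1), ((m:ℝ) - k) * (cb k * cb (m-k)) =
      ∑ k ∈ range (m+1), (k:ℝ) * (cb k * cb (m-k)) :=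
    (Finset.sum_congr rfl key).symm.trans hrefl
  have expand : ∑ k ∈ range (m+1), ((m:ℝ) - k) * (cb k * cb (m-k)) =
      (m:ℝ) * ∑ k ∈ range (m+1), cb k * cb (m-k) - ∑ k ∈ range (m+1), (k:ℝ) * (cb k * cb (m-k)) := by
    rw [Finset.mul_sum, ← Finset.sum_sub_distrib]
    apply Finset.sum_congr rfl
    intro k _; ring
  rw [expand] at h2
  linarith

lemma cb_conv (n : ℕ) : ∑ k ∈ range (n+1), cb k * cb (n-k) = 1 := by
  induction n with
  | zero => simp [cb]
  | succ n ih =>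
    have hA := cb_sym_sum (n+1)
    have hAn := cb_sym_sum n
    push_cast at hA
    have hshift : ∑ k ∈ range (n+2), (2*(k:ℝ)) * (cb k * cb (n+1-k)) =
        ∑ j ∈ range (n+1), (2*(j:ℝ)+2) * (cb (j+1) * cb (n-j)) := by
      rw [Finset.sum_range_succ' (fun k => (2*(k:ℝ)) * (cb k * cb (n+1-k))) (n+1)]
      simp only [Nat.cast_zero, mul_zero, zero_mul, add_zero]
      apply Finset.sum_congr rfl
      intro j hj
      have hj' : n + 1 - (j+1) = n - j := by omega
      rw [hj']
      push_cast; ring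
    have hrec : ∀ j : ℕ, (2*(j:ℝ)+2) * (cb (j+1) * cb (n-j)) = (2*(j:ℝ)+1) * (cb j * cb (n-j)) := by
      intro j
      have h := cb_rec j
      linear_combination cb (n-j) * h
    have h1 : ∑ j ∈ range (n+1), (2*(j:ℝ)+2) * (cb (j+1) * cb (n-j)) =
        ∑ j ∈ range (n+1), (2*(j:ℝ)+1) * (cb j * cb (n-j)) :=
      Finset.sum_congr rfl (fun j _ => hrec j)
    have h2 : ∑ j ∈ range (n+1), (2*(j:ℝ)+1) * (cb j * cb (n-j)) = (n:ℝ) + 1 := by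
      have e : ∑ j ∈ range (n+1), (2*(j:ℝ)+1) * (cb j * cb (n-j)) =
          2 * ∑ j ∈ range (n+1), (j:ℝ) * (cb j * cb (n-j)) + ∑ j ∈ range (n+1), cb j * cb (n-j) := by
        rw [Finset.mul_sum, ← Finset.sum_add_distrib]
        apply Finset.sum_congr rfl; intro j _; ring
      rw [e, hAn, ih]; ring
    have h3 : ∑ k ∈ range (n+2), (2*(k:ℝ)) * (cb k * cb (n+1-k)) =
        ((n:ℝ)+1) * ∑ k ∈ range (n+2), cb k * cb (n+1-k) := by
      have e : ∑ k ∈ range (n+2), (2*(k:ℝ)) * (cb k * cb (n+1-k)) =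
          2 * ∑ k ∈ range (n+2), (k:ℝ) * (cb k * cb (n+1-k)) := by
        rw [Finset.mul_sum]; apply Finset.sum_congr rfl; intro k _; ring
      rw [e, hA]; ring
    have hfin : ((n:ℝ)+1) * ∑ k ∈ range (n+2), cb k * cb (n+1-k) = ((n:ℝ)+1) * 1 := by
      rw [← h3, hshift, h1, h2]; ring
    have hne : ((n:ℝ)+1) ≠ 0 := by positivity
    exact mul_left_cancel₀ hne hfin



lemma summable_pow_succ {t : ℝ} (ht : |t| < 1) : Summable (fun n : ℕ => |t| ^ (n+1)) := by
  simpa [pow_succ, mul_comm] using (summable_geometric_of_lt_one (abs_nonneg t) ht).mul_left |t|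

lemma summable_coeff_pow {c : ℕ → ℝ} (hc : ∀ n, |c n| ≤ 1) {t : ℝ} (ht : |t| < 1) :
    Summable (fun n => c n * t ^ (n+1)) := by
  apply Summable.of_norm_bounded (summable_pow_succ ht)
  intro n
  rw [Real.norm_eq_abs, abs_mul, abs_pow]
  calc |c n| * |t| ^ (n+1) ≤ 1 * |t| ^ (n+1) := by
        apply mul_le_mul_of_nonneg_right (hc n) (by positivity)
    _ = |t| ^ (n+1) := one_mul _

lemma summable_cb_pow {t : ℝ} (ht : |t| < 1) : Summable (fun n => cb n * t ^ n) := by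
  apply Summable.of_norm_bounded (summable_geometric_of_lt_one (abs_nonneg t) ht)
  intro n
  rw [Real.norm_eq_abs, abs_mul, abs_pow]
  calc |cb n| * |t| ^ n ≤ 1 * |t| ^ n := by
        apply mul_le_mul_of_nonneg_right _ (by positivity)
        rw [abs_of_pos (cb_pos n)]; exact cb_le_one n
    _ = |t| ^ n := one_mul _

lemma hasSum_cb {t : ℝ} (h0 : 0 ≤ t) (h1 : t < 1) :
    HasSum (fun n => cb n * t ^ n) (1 / Real.sqrt (1 - t)) := by
  have ht : |t| < 1 := by rw [abs_of_nonneg h0]; exact h1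
  have hs := summable_cb_pow ht
  set S := ∑' n, cb n * t ^ n with hS
  have hnorm : Summable (fun n => ‖cb n * t ^ n‖) := by
    simpa [Real.norm_eq_abs, abs_mul, abs_pow] using hs.abs
  have hsq : S * S = (1 - t)⁻¹ := by
    rw [hS, tsum_mul_tsum_eq_tsum_sum_range_of_summable_norm hnorm hnorm]
    have : ∀ n : ℕ, ∑ k ∈ range (n+1), (cb k * t ^ k) * (cb (n-k) * t ^ (n-k)) = t ^ n := by
      intro n
      have : ∀ k ∈ range (n+1), (cb k * t ^ k) * (cb (n-k) * t ^ (n-k)) =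
          (cb k * cb (n-k)) * t ^ n := by
        intro k hk
        have hk' : k ≤ n := by simpa [Nat.lt_succ_iff] using hk
        rw [show t ^ n = t ^ k * t ^ (n-k) by rw [← pow_add]; congr 1; omega]
        ring
      rw [Finset.sum_congr rfl this, ← Finset.sum_mul, cb_conv, one_mul]
    rw [tsum_congr this, tsum_geometric_of_lt_one h0 h1]
  have hS0 : 0 ≤ S := tsum_nonneg (fun n => mul_nonneg (cb_pos n).le (pow_nonneg h0 n))
  have h1t : (0:ℝ) < 1 - t := by linarith
  have : S = 1 / Real.sqrt (1 - t) := by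
    have h2 : Real.sqrt (S * S) = Real.sqrt ((1-t)⁻¹) := by rw [hsq]
    rw [← Real.sqrt_mul_self hS0, h2, Real.sqrt_inv, one_div]
  exact this ▸ hs.hasSum

lemma hasDerivAt_tsum_pow (c : ℕ → ℝ) (hc : ∀ n, |c n| ≤ 1) {t : ℝ} (ht : |t| < 1) :
    HasDerivAt (fun y : ℝ => ∑' n, c n * y ^ (n+1)) (∑' n, (c n * ((n:ℝ)+1)) * t ^ n) t := by
  set r := (1 + |t|)/2 with hr
  have hr0 : 0 ≤ r := by positivity
  have hr1 : r < 1 := by rw [hr]; linarith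
  have htr : |t| < r := by rw [hr]; linarith [abs_nonneg t]
  have hrpos : 0 < r := by positivity
  have hu : Summable (fun n : ℕ => ((n:ℝ)+1) * r ^ n) := by
    have h1 : Summable (fun n : ℕ => (n:ℝ) * r ^ n) := by
      have := summable_pow_mul_geometric_of_norm_lt_one (R := ℝ) 1
        (r := r) (by rwa [Real.norm_eq_abs, abs_of_nonneg hr0])
      simpa [pow_one] using this
    have h2 : Summable (fun n : ℕ => r ^ n) := summable_geometric_of_lt_one hr0 hr1
    simpa [add_mul] using h1.add h2
  have key := hasDerivAt_tsum_of_isPreconnected (𝕜 := ℝ) (F := ℝ) hu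
    (isOpen_Ioo (a := -r) (b := r)) ((convex_Ioo (-r) r).isPreconnected)
    (g := fun n y => c n * y ^ (n+1)) (g' := fun n y => (c n * ((n:ℝ)+1)) * y ^ n)
    (y₀ := 0) (y := t) ?_ ?_ ?_ ?_ ?_
  · exact key
  · intro n y hy
    have := (hasDerivAt_pow (n+1) y).const_mul (c n)
    refine this.congr_deriv ?_
    push_cast
    ring
  · intro n y hy
    rw [Real.norm_eq_abs, abs_mul, abs_mul, abs_pow]
    have hyr : |y| ≤ r := by
      rw [abs_le]; exact ⟨hy.1.le, hy.2.le⟩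
    have h1 : |c n| * |(n:ℝ)+1| ≤ ((n:ℝ)+1) := by
      rw [abs_of_nonneg (by positivity : (0:ℝ) ≤ (n:ℝ)+1)]
      calc |c n| * ((n:ℝ)+1) ≤ 1 * ((n:ℝ)+1) :=
            mul_le_mul_of_nonneg_right (hc n) (by positivity)
        _ = (n:ℝ)+1 := one_mul _
    exact mul_le_mul h1 (pow_le_pow_left₀ (abs_nonneg y) hyr n) (by positivity) (by positivity)
  · exact ⟨by linarith, hrpos⟩
  · simpa using summable_zero
  · exact ⟨(abs_lt.1 htr).1, (abs_lt.1 htr).2⟩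



noncomputable def Fc (n : ℕ) : ℝ := cb (n+1) / ((n:ℝ)+1)^2
noncomputable def fc (n : ℕ) : ℝ := cb (n+1) / ((n:ℝ)+1)
noncomputable def L2c (n : ℕ) : ℝ := 1 / ((n:ℝ)+1)^2

noncomputable def FF (y : ℝ) : ℝ := ∑' n, Fc n * y ^ (n+1)
noncomputable def ff (y : ℝ) : ℝ := ∑' n, fc n * y ^ (n+1)
noncomputable def Li2 (x : ℝ) : ℝ := ∑' n, L2c n * x ^ (n+1)

lemma Fc_nonneg (n : ℕ) : 0 ≤ Fc n := by
  have := cb_pos (n+1); unfold Fc; positivity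
lemma fc_nonneg (n : ℕ) : 0 ≤ fc n := by
  have := cb_pos (n+1); unfold fc; positivity
lemma L2c_nonneg (n : ℕ) : 0 ≤ L2c n := by unfold L2c; positivity
lemma Fc_le_one (n : ℕ) : Fc n ≤ 1 := by
  unfold Fc
  rw [div_le_one (by positivity)]
  calc cb (n+1) ≤ 1 := cb_le_one (n+1)
    _ ≤ ((n:ℝ)+1)^2 := by nlinarith [Nat.cast_nonneg (α := ℝ) n]
lemma fc_le_one (n : ℕ) : fc n ≤ 1 := by
  unfold fc
  rw [div_le_one (by positivity)]
  calc cb (n+1) ≤ 1 := cb_le_one (n+1)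
    _ ≤ ((n:ℝ)+1) := by linarith [Nat.cast_nonneg (α := ℝ) n]
lemma L2c_le_one (n : ℕ) : L2c n ≤ 1 := by
  unfold L2c
  rw [div_le_one (by positivity)]
  nlinarith [Nat.cast_nonneg (α := ℝ) n]

/-- squeeze: tsum of dominated powers tends to 0 at 0 within Ioo 0 1 -/
lemma tendsto_tsum_pow_zero (c : ℕ → ℝ) (h0 : ∀ n, 0 ≤ c n) (h1 : ∀ n, c n ≤ 1) :
    Tendsto (fun t => ∑' n, c n * t ^ (n+1)) (𝓝[Set.Ioo (0:ℝ) 1] 0) (𝓝 0) := by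
  have habs : ∀ n, |c n| ≤ 1 := fun n => by rw [abs_of_nonneg (h0 n)]; exact h1 n
  apply squeeze_zero'
  · filter_upwards [self_mem_nhdsWithin] with t ht
    exact tsum_nonneg (fun n => mul_nonneg (h0 n) (pow_nonneg ht.1.le _))
  · filter_upwards [self_mem_nhdsWithin] with t ht
    have htabs : |t| < 1 := by rw [abs_of_pos ht.1]; exact ht.2
    have hgeo : HasSum (fun n : ℕ => t ^ (n+1)) (t * (1-t)⁻¹) := by
      have := (hasSum_geometric_of_lt_one ht.1.le ht.2).mul_left t
      apply this.congr_fun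
      intro n; rw [pow_succ, mul_comm]
    apply Summable.tsum_le_tsum _ (summable_coeff_pow habs htabs) hgeo.summable |>.trans
    · rw [hgeo.tsum_eq]
    · intro n
      calc c n * t ^ (n+1) ≤ 1 * t ^ (n+1) :=
            mul_le_mul_of_nonneg_right (h1 n) (pow_nonneg ht.1.le _)
        _ = t ^ (n+1) := one_mul _
  · have hcont : ContinuousAt (fun t : ℝ => t * (1-t)⁻¹) 0 := by
      apply ContinuousAt.mul continuousAt_id
      apply ContinuousAt.inv₀ (by fun_prop) (by norm_num)
    have h2 := hcont.tendsto.mono_left (nhdsWithin_le_nhds (s := Set.Ioo (0:ℝ) 1))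
    simpa using h2

lemma summable_L2c : Summable L2c := by
  have h : Summable (fun n : ℕ => 1 / (n:ℝ)^2) :=
    Real.summable_one_div_nat_pow.mpr one_lt_two
  have := (summable_nat_add_iff 1).mpr h
  apply this.congr
  intro n
  unfold L2c
  push_cast
  ring

lemma continuousOn_tsum_pow (c : ℕ → ℝ) (hc : ∀ n, |c n| ≤ L2c n) :
    ContinuousOn (fun x : ℝ => ∑' n, c n * x ^ (n+1)) (Set.Icc (-1:ℝ) 1) := by
  apply TendstoUniformlyOn.continuousOn
    (tendstoUniformlyOn_tsum summable_L2c ?_)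
    (Filter.Eventually.of_forall ?_).frequently
  · intro n x hx
    rw [Real.norm_eq_abs, abs_mul, abs_pow]
    have hx1 : |x| ≤ 1 := abs_le.mpr ⟨hx.1, hx.2⟩
    calc |c n| * |x| ^ (n+1) ≤ L2c n * 1 := by
          apply mul_le_mul (hc n) (pow_le_one₀ (abs_nonneg x) hx1)
            (by positivity) ((abs_nonneg (c n)).trans (hc n))
      _ = L2c n := mul_one _
  · intro s
    exact (continuous_finset_sum s fun i _ => by continuity).continuousOn



lemma Fc_abs_le (n : ℕ) : |Fc n| ≤ 1 := by rw [abs_of_nonneg (Fc_nonneg n)]; exact Fc_le_one n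
lemma fc_abs_le (n : ℕ) : |fc n| ≤ 1 := by rw [abs_of_nonneg (fc_nonneg n)]; exact fc_le_one n
lemma L2c_abs_le (n : ℕ) : |L2c n| ≤ 1 := by rw [abs_of_nonneg (L2c_nonneg n)]; exact L2c_le_one n

lemma neBot_zero : (𝓝[Set.Ioo (0:ℝ) 1] (0:ℝ)).NeBot := by
  rw [← mem_closure_iff_nhdsWithin_neBot, closure_Ioo (by norm_num : (0:ℝ) ≠ 1)]
  exact ⟨le_refl 0, zero_le_one⟩

lemma neBot_one : (𝓝[Set.Ioo (0:ℝ) 1] (1:ℝ)).NeBot := by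
  rw [← mem_closure_iff_nhdsWithin_neBot, closure_Ioo (by norm_num : (0:ℝ) ≠ 1)]
  exact ⟨zero_le_one, le_refl 1⟩

lemma const_on_Ioo {φ : ℝ → ℝ} (h : ∀ t ∈ Set.Ioo (0:ℝ) 1, HasDerivAt φ 0 t) :
    ∀ x ∈ Set.Ioo (0:ℝ) 1, ∀ y ∈ Set.Ioo (0:ℝ) 1, φ x = φ y := by
  suffices H : ∀ x y : ℝ, x ∈ Set.Ioo (0:ℝ) 1 → y ∈ Set.Ioo (0:ℝ) 1 → x ≤ y → φ x = φ y by
    intro x hx y hy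
    rcases le_total x y with h' | h'
    · exact H x y hx hy h'
    · exact (H y x hy hx h').symm
  intro x y hx hy hxy
  have hsub : Set.Icc x y ⊆ Set.Ioo (0:ℝ) 1 :=
    fun z hz => ⟨lt_of_lt_of_le hx.1 hz.1, lt_of_le_of_lt hz.2 hy.2⟩
  have key := constant_of_has_deriv_right_zero (f := φ) (a := x) (b := y)
    (fun z hz => (h z (hsub hz)).continuousAt.continuousWithinAt)
    (fun z hz => (h z (hsub (Set.Ico_subset_Icc_self hz))).hasDerivWithinAt)
  exact (key y (Set.right_mem_Icc.mpr hxy)).symm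

section closedforms
variable {t : ℝ}

lemma sqrt_facts (ht : t ∈ Set.Ioo (0:ℝ) 1) :
    0 < Real.sqrt (1-t) ∧ Real.sqrt (1-t) < 1 ∧ Real.sqrt (1-t)^2 = 1-t := by
  have h1 : (0:ℝ) < 1 - t := by linarith [ht.2]
  refine ⟨Real.sqrt_pos.mpr h1, ?_, Real.sq_sqrt h1.le⟩
  have : Real.sqrt (1-t) < Real.sqrt 1 := Real.sqrt_lt_sqrt h1.le (by linarith [ht.1])
  simpa using this

lemma hasDerivAt_sqrt1t (ht : t ∈ Set.Ioo (0:ℝ) 1) :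
    HasDerivAt (fun y : ℝ => Real.sqrt (1-y)) (1/(2*Real.sqrt (1-t)) * (-1)) t := by
  have h1 : (1:ℝ) - t ≠ 0 := by have h := ht.2; intro hc; linarith
  have h2 := (Real.hasDerivAt_sqrt h1).comp t ((hasDerivAt_id t).const_sub 1)
  simpa [Function.comp_def] using h2

lemma hasDerivAt_ff (ht : t ∈ Set.Ioo (0:ℝ) 1) :
    HasDerivAt ff ((1/Real.sqrt (1-t) - 1)/t) t := by
  obtain ⟨ht0, ht1⟩ := ht
  have htabs : |t| < 1 := by rw [abs_of_pos ht0]; exact ht1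
  have key := hasDerivAt_tsum_pow fc fc_abs_le htabs
  have hval : ∑' n, (fc n * ((n:ℝ)+1)) * t ^ n = (1/Real.sqrt (1-t) - 1)/t := by
    have hcb : ∀ n : ℕ, (fc n * ((n:ℝ)+1)) * t ^ n = cb (n+1) * t ^ n := by
      intro n
      unfold fc
      field_simp
    rw [tsum_congr hcb]
    have hS := hasSum_cb ht0.le ht1
    have htail : HasSum (fun n => cb (n+1) * t ^ (n+1)) (1/Real.sqrt (1-t) - 1) := by
      apply (hasSum_nat_add_iff (f := fun n => cb n * t ^ n) 1).mpr
      have he : 1/Real.sqrt (1-t) - 1 + ∑ i ∈ range 1, cb i * t ^ i = 1/Real.sqrt (1-t) := by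
        simp [cb_zero]
      rw [he]
      exact hS
    have hdiv := htail.div_const t
    have : HasSum (fun n => cb (n+1) * t ^ n) ((1/Real.sqrt (1-t) - 1)/t) := by
      apply hdiv.congr_fun
      intro n
      rw [pow_succ]
      field_simp
    exact this.tsum_eq
  rw [hval] at key
  exact key

lemma ff_eq (ht : t ∈ Set.Ioo (0:ℝ) 1) :
    ff t = -2 * Real.log ((1 + Real.sqrt (1-t))/2) := by
  set φ : ℝ → ℝ := fun y => ff y + 2 * Real.log ((1 + Real.sqrt (1-y))/2) with hφ
  have hderiv : ∀ s ∈ Set.Ioo (0:ℝ) 1, HasDerivAt φ 0 s := by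
    intro s hs
    obtain ⟨hu0, hu1, hu2⟩ := sqrt_facts hs
    set u := Real.sqrt (1-s) with hu
    have hlog : HasDerivAt (fun y : ℝ => Real.log ((1 + Real.sqrt (1-y))/2))
        ((1/(2*u) * (-1))/2 / ((1+u)/2)) s := by
      have hpos : (1+u)/2 ≠ 0 := by positivity
      exact (((hasDerivAt_sqrt1t hs).const_add 1).div_const 2).log hpos
    have := (hasDerivAt_ff hs).add (hlog.const_mul 2)
    refine this.congr_deriv ?_
    have hs0 : s ≠ 0 := ne_of_gt hs.1
    have hsu : s = (1-u)*(1+u) := by nlinarith [hu2]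
    have h1u : (1:ℝ) - u ≠ 0 := by intro h; nlinarith
    have h2u : (1:ℝ) + u ≠ 0 := by positivity
    rw [← hu, hsu]
    field_simp
    ring
  have hconst := const_on_Ioo hderiv
  have hlim0 : Tendsto φ (𝓝[Set.Ioo (0:ℝ) 1] 0) (𝓝 0) := by
    have h1 : Tendsto ff (𝓝[Set.Ioo (0:ℝ) 1] 0) (𝓝 0) :=
      tendsto_tsum_pow_zero fc fc_nonneg fc_le_one
    have h2 : Tendsto (fun y : ℝ => 2 * Real.log ((1 + Real.sqrt (1-y))/2))
        (𝓝[Set.Ioo (0:ℝ) 1] 0) (𝓝 0) := by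
      have hc : ContinuousAt (fun y : ℝ => 2 * Real.log ((1 + Real.sqrt (1-y))/2)) 0 := by
        apply ContinuousAt.mul continuousAt_const
        apply ContinuousAt.log (by fun_prop)
        simp
      have := hc.tendsto.mono_left (nhdsWithin_le_nhds (s := Set.Ioo (0:ℝ) 1))
      simpa using this
    simpa using h1.add h2
  have : φ t = 0 := by
    haveI := neBot_zero
    have heq : Tendsto φ (𝓝[Set.Ioo (0:ℝ) 1] 0) (𝓝 (φ t)) := by
      apply tendsto_const_nhds.congr'
      filter_upwards [self_mem_nhdsWithin] with s hs
      exact (hconst t ht s hs)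
    exact (tendsto_nhds_unique heq hlim0)
  rw [hφ] at this
  simp only at this
  linarith [this]
end closedforms

section part5
variable {t x : ℝ}

lemma hasDerivAt_FF (ht : t ∈ Set.Ioo (0:ℝ) 1) : HasDerivAt FF (ff t / t) t := by
  obtain ⟨ht0, ht1⟩ := ht
  have htabs : |t| < 1 := by rw [abs_of_pos ht0]; exact ht1
  have key := hasDerivAt_tsum_pow Fc Fc_abs_le htabs
  have hval : ∑' n, (Fc n * ((n:ℝ)+1)) * t ^ n = ff t / t := by
    have hsum : HasSum (fun n => fc n * t ^ (n+1)) (ff t) :=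
      (summable_coeff_pow fc_abs_le htabs).hasSum
    have hdiv := hsum.div_const t
    have h2 : HasSum (fun n => (Fc n * ((n:ℝ)+1)) * t ^ n) (ff t / t) := by
      apply hdiv.congr_fun
      intro n
      have hne : ((n:ℝ)+1) ≠ 0 := by positivity
      unfold Fc fc
      rw [pow_succ]
      field_simp
      ring
    exact h2.tsum_eq
  rw [hval] at key
  exact key

lemma hasDerivAt_Li2 (hx : x ∈ Set.Ioo (0:ℝ) 1) :
    HasDerivAt Li2 (-Real.log (1-x)/x) x := by
  obtain ⟨hx0, hx1⟩ := hx
  have hxabs : |x| < 1 := by rw [abs_of_pos hx0]; exact hx1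
  have key := hasDerivAt_tsum_pow L2c L2c_abs_le hxabs
  have hval : ∑' n, (L2c n * ((n:ℝ)+1)) * x ^ n = -Real.log (1-x)/x := by
    have hlog := Real.hasSum_pow_div_log_of_abs_lt_one hxabs
    have hdiv := hlog.div_const x
    have h2 : HasSum (fun n => (L2c n * ((n:ℝ)+1)) * x ^ n) (-Real.log (1-x)/x) := by
      apply hdiv.congr_fun
      intro n
      have hne : ((n:ℝ)+1) ≠ 0 := by positivity
      unfold L2c
      rw [pow_succ]
      field_simp
      ring
    exact h2.tsum_eq
  rw [hval] at key
  exact key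

noncomputable def GG (y : ℝ) : ℝ :=
  -2 * Li2 ((1 - Real.sqrt (1-y))/2) + (Real.log ((1 + Real.sqrt (1-y))/2))^2

lemma Li2_zero : Li2 0 = 0 := by
  unfold Li2
  simp

lemma FF_zero : FF 0 = 0 := by
  unfold FF
  simp

lemma hasDerivAt_psi (ht : t ∈ Set.Ioo (0:ℝ) 1) :
    HasDerivAt (fun y => FF y + GG y) 0 t := by
  obtain ⟨hu0, hu1, hu2⟩ := sqrt_facts ht
  set u := Real.sqrt (1-t) with hu
  have ht0 : (0:ℝ) < t := ht.1
  have hFd : HasDerivAt FF (-2 * Real.log ((1+u)/2) / t) t := by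
    have h := hasDerivAt_FF ht
    rwa [ff_eq ht, ← hu] at h
  have hsq := hasDerivAt_sqrt1t ht
  rw [← hu] at hsq
  have hinner2 : HasDerivAt (fun y : ℝ => (1 - Real.sqrt (1-y))/2)
      ((-(1/(2*u) * (-1)))/2) t := (hsq.const_sub 1).div_const 2
  have hxmem : (1-u)/2 ∈ Set.Ioo (0:ℝ) 1 := by
    constructor <;> [linarith; linarith]
  have hLi2c : HasDerivAt (fun y : ℝ => Li2 ((1 - Real.sqrt (1-y))/2))
      ((-Real.log (1-(1-u)/2)/((1-u)/2)) * ((-(1/(2*u) * (-1)))/2)) t := by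
    have h := (hasDerivAt_Li2 hxmem).comp t hinner2
    simpa [Function.comp_def] using h
  have hlog : HasDerivAt (fun y : ℝ => Real.log ((1 + Real.sqrt (1-y))/2))
      ((1/(2*u) * (-1))/2 / ((1+u)/2)) t := by
    have hpos : (1+u)/2 ≠ 0 := by positivity
    exact ((hsq.const_add 1).div_const 2).log hpos
  have hlogsq := hlog.pow 2
  have total := hFd.add ((hLi2c.const_mul (-2:ℝ)).add hlogsq)
  have : (fun y => FF y + GG y) = (fun y => FF y +
      (-2 * Li2 ((1 - Real.sqrt (1-y))/2) + (Real.log ((1 + Real.sqrt (1-y))/2))^2)) := by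
    funext y; rw [GG]
  rw [this]
  refine total.congr_deriv ?_
  have hsu : t = (1-u)*(1+u) := by nlinarith [hu2]
  have h1u : (1:ℝ) - u ≠ 0 := by intro h; nlinarith
  have h2u : (1:ℝ) + u ≠ 0 := by positivity
  have harg : (1:ℝ) - (1-u)/2 = (1+u)/2 := by ring
  rw [harg, ← hu, hsu]
  field_simp
  ring
end part5
section part6

lemma FF_contOn : ContinuousOn FF (Set.Icc (-1:ℝ) 1) := by
  have h := continuousOn_tsum_pow Fc (fun n => by
    rw [abs_of_nonneg (Fc_nonneg n)]
    unfold Fc L2c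
    gcongr
    exact cb_le_one (n+1))
  exact h

lemma Li2_contOn : ContinuousOn Li2 (Set.Icc (-1:ℝ) 1) := by
  have h := continuousOn_tsum_pow L2c (fun n => le_of_eq (abs_of_nonneg (L2c_nonneg n)))
  exact h

lemma innerw_mapsTo : ∀ y ∈ Set.Icc (0:ℝ) 1, (1 - Real.sqrt (1-y))/2 ∈ Set.Icc (-1:ℝ) 1 := by
  intro y hy
  have h0 : 0 ≤ Real.sqrt (1-y) := Real.sqrt_nonneg _
  have h1 : Real.sqrt (1-y) ≤ 1 := Real.sqrt_le_one.mpr (by linarith [hy.1])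
  exact Set.mem_Icc.mpr ⟨by linarith, by linarith⟩

lemma GG_contOn : ContinuousOn GG (Set.Icc (0:ℝ) 1) := by
  unfold GG
  apply ContinuousOn.add
  · apply continuousOn_const.mul
    apply ContinuousOn.comp Li2_contOn
    · exact (by fun_prop : Continuous (fun y : ℝ => (1 - Real.sqrt (1-y))/2)).continuousOn
    · exact innerw_mapsTo
  · apply ContinuousOn.pow
    apply ContinuousOn.log
    · exact (by fun_prop : Continuous (fun y : ℝ => (1 + Real.sqrt (1-y))/2)).continuousOn
    · intro y hy
      have h0 : 0 ≤ Real.sqrt (1-y) := Real.sqrt_nonneg _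
      positivity

lemma GG_zero : GG 0 = 0 := by
  unfold GG
  simp [Real.sqrt_one, Li2_zero]

lemma psi_eq : FF 1 + GG 1 = FF 0 + GG 0 := by
  set ψ : ℝ → ℝ := fun y => FF y + GG y with hψ
  have hψc : ContinuousOn ψ (Set.Icc (0:ℝ) 1) := by
    apply ContinuousOn.add _ GG_contOn
    exact FF_contOn.mono (fun z hz => ⟨by linarith [hz.1], hz.2⟩)
  have hconst := const_on_Ioo (fun s hs => hasDerivAt_psi hs)
  have hhalf : (1/2 : ℝ) ∈ Set.Ioo (0:ℝ) 1 := by norm_num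
  have key : ∀ z ∈ Set.Icc (0:ℝ) 1, (𝓝[Set.Ioo (0:ℝ) 1] z).NeBot → ψ z = ψ (1/2) := by
    intro z hz hne
    haveI := hne
    have h1 : Tendsto ψ (𝓝[Set.Ioo (0:ℝ) 1] z) (𝓝 (ψ z)) :=
      (hψc z hz).mono Set.Ioo_subset_Icc_self
    have h2 : Tendsto ψ (𝓝[Set.Ioo (0:ℝ) 1] z) (𝓝 (ψ (1/2))) := by
      apply tendsto_const_nhds.congr'
      filter_upwards [self_mem_nhdsWithin] with s hs
      exact (hconst (1/2) hhalf s hs)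
    exact tendsto_nhds_unique h1 h2
  have e0 := key 0 (by norm_num) neBot_zero
  have e1 := key 1 (by norm_num) neBot_one
  exact e1.trans e0.symm

lemma GG_one : GG 1 = -2 * Li2 (1/2) + (Real.log 2)^2 := by
  unfold GG
  rw [show (1:ℝ) - 1 = 0 by ring, Real.sqrt_zero]
  rw [show ((1:ℝ) - 0)/2 = 1/2 by norm_num, show ((1:ℝ) + 0)/2 = 1/2 by norm_num]
  rw [one_div, Real.log_inv]
  ring

lemma FF_one : FF 1 = 2 * Li2 (1/2) - (Real.log 2)^2 := by
  have h := psi_eq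
  rw [FF_zero, GG_zero, GG_one] at h
  linarith

lemma Li2_reflection : 2 * Li2 (1/2) = Li2 1 - (Real.log 2)^2 := by
  set Ψ : ℝ → ℝ := fun x => Li2 x + Li2 (1-x) + Real.log x * Real.log (1-x) with hΨ
  have hderiv : ∀ x ∈ Set.Ioo (0:ℝ) 1, HasDerivAt Ψ 0 x := by
    intro x hx
    obtain ⟨hx0, hx1⟩ := hx
    have h1x : (1:ℝ) - x ∈ Set.Ioo (0:ℝ) 1 := ⟨by linarith, by linarith⟩
    have hd1 := hasDerivAt_Li2 ⟨hx0, hx1⟩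
    have hd2 : HasDerivAt (fun y : ℝ => Li2 (1-y)) (Real.log x/(1-x)) x := by
      have h := (hasDerivAt_Li2 h1x).comp x ((hasDerivAt_id x).const_sub 1)
      have he : -Real.log (1-(1-x))/(1-x) * (-1) = Real.log x/(1-x) := by
        rw [show (1:ℝ)-(1-x) = x by ring]; ring
      rw [← he]
      simpa [Function.comp_def] using h
    have hd3log : HasDerivAt (fun y : ℝ => Real.log (1-y)) ((1-x)⁻¹ * (-1)) x := by
      have h := (Real.hasDerivAt_log (by intro hc; linarith : (1:ℝ)-x ≠ 0)).comp x
        ((hasDerivAt_id x).const_sub 1)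
      simpa [Function.comp_def] using h
    have hd3 := (Real.hasDerivAt_log (ne_of_gt hx0)).mul hd3log
    have total := (hd1.add hd2).add hd3
    refine total.congr_deriv ?_
    have hne1 : (1:ℝ) - x ≠ 0 := by intro hc; linarith
    have hnex : x ≠ 0 := ne_of_gt hx0
    field_simp
    ring
  have hconst := const_on_Ioo hderiv
  have hhalf : (1/2 : ℝ) ∈ Set.Ioo (0:ℝ) 1 := by norm_num
  haveI := neBot_zero
  have hlim : Tendsto Ψ (𝓝[Set.Ioo (0:ℝ) 1] 0) (𝓝 (Li2 1)) := by
    have t1 : Tendsto Li2 (𝓝[Set.Ioo (0:ℝ) 1] 0) (𝓝 0) :=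
      tendsto_tsum_pow_zero L2c L2c_nonneg L2c_le_one
    have t2 : Tendsto (fun x => Li2 (1-x)) (𝓝[Set.Ioo (0:ℝ) 1] 0) (𝓝 (Li2 1)) := by
      have hmem : (1:ℝ) ∈ Set.Icc (-1:ℝ) 1 := by norm_num
      have hcw : ContinuousWithinAt Li2 (Set.Icc (-1:ℝ) 1) ((fun x : ℝ => 1-x) 0) := by
        simpa using Li2_contOn 1 hmem
      have hin : ContinuousWithinAt (fun x : ℝ => 1 - x) (Set.Ioo (0:ℝ) 1) 0 :=
        (by fun_prop : Continuous (fun x : ℝ => 1 - x)).continuousWithinAt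
      have hmaps : Set.MapsTo (fun x : ℝ => 1 - x) (Set.Ioo (0:ℝ) 1) (Set.Icc (-1:ℝ) 1) := by
        intro z hz
        refine Set.mem_Icc.mpr ⟨?_, ?_⟩ <;> simp only [] <;> [linarith [hz.2]; linarith [hz.1]]
      have hcomp := ContinuousWithinAt.comp hcw hin hmaps
      have : Tendsto (fun x : ℝ => Li2 (1-x)) (𝓝[Set.Ioo (0:ℝ) 1] 0) (𝓝 (Li2 (1-0))) := hcomp
      simpa using this
    have t3 : Tendsto (fun x => Real.log x * Real.log (1-x)) (𝓝[Set.Ioo (0:ℝ) 1] 0) (𝓝 0) := by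
      have hg : Tendsto (fun x : ℝ => 2 * |Real.log x * x|) (𝓝[Set.Ioo (0:ℝ) 1] 0) (𝓝 0) := by
        have h0 : Tendsto (fun x : ℝ => Real.log x * x) (𝓝[>] (0:ℝ)) (𝓝 0) := by
          have := tendsto_log_mul_rpow_nhdsGT_zero zero_lt_one
          simpa [Real.rpow_one] using this
        have h1 := (h0.abs).const_mul (2:ℝ)
        have h2 := h1.mono_left (nhdsWithin_mono 0 (Set.Ioo_subset_Ioi_self : Set.Ioo (0:ℝ) 1 ⊆ Set.Ioi 0))
        simpa using h2
      apply squeeze_zero_norm' _ hg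
      filter_upwards [self_mem_nhdsWithin,
        mem_nhdsWithin_of_mem_nhds (Iio_mem_nhds (by norm_num : (0:ℝ) < 1/2))] with x hx hx2
      have hx0 : (0:ℝ) < x := hx.1
      have hxh : x < 1/2 := hx2
      have h1x : (0:ℝ) < 1 - x := by linarith [hx.2]
      have hBnp : Real.log (1-x) ≤ 0 := Real.log_nonpos (by linarith) (by linarith)
      have hB : |Real.log (1-x)| ≤ 2*x := by
        rw [abs_of_nonpos hBnp, show -Real.log (1-x) = Real.log (1-x)⁻¹ by
          rw [Real.log_inv]]
        have hle := Real.log_le_sub_one_of_pos (by positivity : (0:ℝ) < (1-x)⁻¹)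
        have heq : (1-x)⁻¹ - 1 = x/(1-x) := by field_simp; ring
        have h4 : x/(1-x) ≤ 2*x := by
          rw [div_le_iff₀ h1x]; nlinarith
        linarith
      rw [Real.norm_eq_abs, abs_mul]
      calc |Real.log x| * |Real.log (1-x)| ≤ |Real.log x| * (2*x) :=
            mul_le_mul_of_nonneg_left hB (abs_nonneg _)
        _ = 2 * |Real.log x * x| := by
            rw [abs_mul, abs_of_pos hx0]; ring
    have := (t1.add t2).add t3
    simpa using this
  have hΨval : Ψ (1/2) = Li2 1 := by
    have h2 : Tendsto Ψ (𝓝[Set.Ioo (0:ℝ) 1] 0) (𝓝 (Ψ (1/2))) := by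
      apply tendsto_const_nhds.congr'
      filter_upwards [self_mem_nhdsWithin] with s hs
      exact (hconst (1/2) hhalf s hs)
    exact tendsto_nhds_unique h2 hlim
  have hv : Li2 (1/2) + Li2 (1-(1/2):ℝ) + Real.log (1/2) * Real.log (1-(1/2):ℝ) = Li2 1 := hΨval
  rw [show (1:ℝ)-(1/2) = 1/2 by norm_num] at hv
  rw [show Real.log ((1:ℝ)/2) = -Real.log 2 by rw [one_div, Real.log_inv]] at hv
  nlinarith [hv]

end part6


theorem stmt_1 :
    ∑' n : ℕ, ((Nat.choose (2 * (n + 1)) (n + 1) : ℝ) / 4 ^ (n + 1)) / ((n : ℝ) + 1) ^ 2 =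
    zval 2 - 2 * Real.log 2 ^ 2 := by
  have h1 : ∑' n : ℕ, ((Nat.choose (2 * (n + 1)) (n + 1) : ℝ) / 4 ^ (n + 1)) / ((n : ℝ) + 1) ^ 2
      = FF 1 := by
    unfold FF
    apply tsum_congr
    intro n
    simp [Fc, cb]
  have h2 : zval 2 = Li2 1 := by
    unfold zval Li2
    apply tsum_congr
    intro n
    simp [L2c]
  rw [h1, FF_one, h2]
  linarith [Li2_reflection]
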